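/- Let (ρ_n) be a sequence of nonnegative functions bounded in L¹(ℝ). Then there exists a subsequence (still denoted ρ_n) satisfying exactly one of: (i) (Vanishing) for every 0 < R < ∞, lim_{n→∞} sup_{y ∈ ℝ} ∫_{y−R}^{y+R} ρ_n(x) dx = 0; or (ii) (Non-vanishing) there exist α > 0, R < ∞ and a sequence (y_n) ⊂ ℝ such that lim inf_{n→∞} ∫_{y_n−R}^{y_n+R} ρ_n(x) dx ≥ α > 0. -/

import Mathlib

noncomputable section
open MeasureTheory Filter
open scoped ENNReal NNReal

section Aux

variable {ρ : ℕ → ℝ → ℝ} {C : ℝ}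

private lemma aux_nonneg (hpos : ∀ n x, 0 ≤ ρ n x) (n : ℕ) {s : Set ℝ}
    (hs : MeasurableSet s) : 0 ≤ ∫ x in s, ρ n x :=
  setIntegral_nonneg hs (fun x _ => hpos n x)

private lemma aux_le (hpos : ∀ n x, 0 ≤ ρ n x) (hint : ∀ n, Integrable (ρ n))
    (hbdd : ∀ n, (∫ x, ρ n x) ≤ C) (n : ℕ) (s : Set ℝ) :
    ∫ x in s, ρ n x ≤ C :=
  (setIntegral_le_integral (hint n) (Eventually.of_forall (hpos n))).trans (hbdd n)

private lemma aux_bdd (hpos : ∀ n x, 0 ≤ ρ n x) (hint : ∀ n, Integrable (ρ n))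
    (hbdd : ∀ n, (∫ x, ρ n x) ≤ C) (n : ℕ) (R : ℝ) :
    BddAbove (Set.range fun y : ℝ => ∫ x in Set.Ioo (y - R) (y + R), ρ n x) := by
  refine ⟨C, ?_⟩
  rintro _ ⟨y, rfl⟩
  exact aux_le hpos hint hbdd n _

/-- The concentration function at scale 1. -/
private def Sfun (ρ : ℕ → ℝ → ℝ) (n : ℕ) : ℝ :=
  ⨆ y : ℝ, ∫ x in Set.Ioo (y - 1) (y + 1), ρ n x

private lemma Sfun_nonneg (hpos : ∀ n x, 0 ≤ ρ n x) (hint : ∀ n, Integrable (ρ n))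
    (hbdd : ∀ n, (∫ x, ρ n x) ≤ C) (n : ℕ) : 0 ≤ Sfun ρ n :=
  le_trans (aux_nonneg hpos n measurableSet_Ioo)
    (le_ciSup (aux_bdd hpos hint hbdd n 1) (0 : ℝ))

/-- Covering bound: an interval of length ≤ 2m gives integral ≤ m * S n. -/
private lemma cover_bound (hpos : ∀ n x, 0 ≤ ρ n x) (hint : ∀ n, Integrable (ρ n))
    (hbdd : ∀ n, (∫ x, ρ n x) ≤ C) (n : ℕ) :
    ∀ m : ℕ, ∀ a b : ℝ, b ≤ a + 2 * m →
      ∫ x in Set.Ioc a b, ρ n x ≤ m * Sfun ρ n := by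
  intro m
  induction m with
  | zero =>
    intro a b hb
    simp only [Nat.cast_zero, mul_zero, add_zero] at hb ⊢
    rw [Set.Ioc_eq_empty (by exact not_lt.mpr hb)]
    simp
  | succ m ih =>
    intro a b hb
    have hIoc : ∫ x in Set.Ioc a (a + 2), ρ n x ≤ Sfun ρ n := by
      rw [integral_Ioc_eq_integral_Ioo]
      have : Set.Ioo a (a + 2) = Set.Ioo ((a + 1) - 1) ((a + 1) + 1) := by
        ring_nf
      rw [this]
      exact le_ciSup (aux_bdd hpos hint hbdd n 1) (a + 1)
    by_cases hcase : b ≤ a + 2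
    · have hsub : ∫ x in Set.Ioc a b, ρ n x ≤ ∫ x in Set.Ioc a (a + 2), ρ n x := by
        apply setIntegral_mono_set ((hint n).integrableOn)
          (Eventually.of_forall fun x => hpos n x)
        exact Eventually.of_forall (Set.Ioc_subset_Ioc le_rfl hcase)
      calc ∫ x in Set.Ioc a b, ρ n x ≤ Sfun ρ n := hsub.trans hIoc
        _ ≤ (m + 1 : ℕ) * Sfun ρ n := by
            push_cast
            nlinarith [Sfun_nonneg hpos hint hbdd n, Nat.cast_nonneg (α := ℝ) m]
    · push_neg at hcase
      have hsplit : ∫ x in Set.Ioc a b, ρ n x =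
          (∫ x in Set.Ioc a (a + 2), ρ n x) + ∫ x in Set.Ioc (a + 2) b, ρ n x := by
        rw [← setIntegral_union (Set.Ioc_disjoint_Ioc_of_le le_rfl) measurableSet_Ioc
          ((hint n).integrableOn) ((hint n).integrableOn),
          Set.Ioc_union_Ioc_eq_Ioc (by linarith) hcase.le]
      have h2 : ∫ x in Set.Ioc (a + 2) b, ρ n x ≤ m * Sfun ρ n := by
        apply ih
        push_cast at hb ⊢
        linarith
      rw [hsplit]
      push_cast
      linarith

/-- Vanishing and non-vanishing are mutually exclusive. -/
private lemma excl (hpos : ∀ n x, 0 ≤ ρ n x) (hint : ∀ n, Integrable (ρ n))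
    (hbdd : ∀ n, (∫ x, ρ n x) ≤ C) (φ : ℕ → ℕ)
    (hV : ∀ R : ℝ, 0 < R →
      Tendsto (fun n => ⨆ y : ℝ, ∫ x in Set.Ioo (y - R) (y + R), ρ (φ n) x)
        atTop (nhds 0))
    (hNV : ∃ α : ℝ, 0 < α ∧ ∃ R : ℝ, ∃ y : ℕ → ℝ,
      α ≤ Filter.atTop.liminf
        (fun n => ∫ x in Set.Ioo (y n - R) (y n + R), ρ (φ n) x)) : False := by
  obtain ⟨α, hα, R, y, hle⟩ := hNV
  by_cases hR : 0 < R
  · have hsup := hV R hR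
    have h1 : Filter.atTop.liminf
        (fun n => ∫ x in Set.Ioo (y n - R) (y n + R), ρ (φ n) x) ≤
        Filter.atTop.liminf
          (fun n => ⨆ z : ℝ, ∫ x in Set.Ioo (z - R) (z + R), ρ (φ n) x) := by
      have hu : IsBoundedUnder (· ≥ ·) atTop
          (fun n => ∫ x in Set.Ioo (y n - R) (y n + R), ρ (φ n) x) :=
        isBoundedUnder_of ⟨0, fun n => aux_nonneg hpos (φ n) measurableSet_Ioo⟩
      have hv : IsCoboundedUnder (· ≥ ·) atTop
          (fun n => ⨆ z : ℝ, ∫ x in Set.Ioo (z - R) (z + R), ρ (φ n) x) := by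
        have hb : IsBoundedUnder (· ≤ ·) atTop
            (fun n => ⨆ z : ℝ, ∫ x in Set.Ioo (z - R) (z + R), ρ (φ n) x) :=
          isBoundedUnder_of ⟨C, fun n =>
            ciSup_le fun z => aux_le hpos hint hbdd (φ n) _⟩
        exact hb.isCoboundedUnder_ge
      refine liminf_le_liminf ?_ hu hv
      exact Eventually.of_forall fun n =>
        le_ciSup (aux_bdd hpos hint hbdd (φ n) R) (y n)
    rw [hsup.liminf_eq] at h1
    linarith [hle.trans h1]
  · push_neg at hR
    have hz : ∀ n, (∫ x in Set.Ioo (y n - R) (y n + R), ρ (φ n) x) = 0 := by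
      intro n
      rw [Set.Ioo_eq_empty (by intro h; linarith)]
      simp
    simp only [hz] at hle
    rw [liminf_const] at hle
    linarith

end Aux

/-- Lions' concentration-compactness dichotomy (vanishing /
non-vanishing) for bounded sequences of nonnegative functions in L¹(ℝ). -/
theorem stmt9 (ρ : ℕ → ℝ → ℝ) (hpos : ∀ n x, 0 ≤ ρ n x)
    (hint : ∀ n, Integrable (ρ n)) (C : ℝ) (hbdd : ∀ n, (∫ x, ρ n x) ≤ C) :
    ∃ φ : ℕ → ℕ, StrictMono φ ∧
      Xor'
        (∀ R : ℝ, 0 < R →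
          Tendsto (fun n => ⨆ y : ℝ, ∫ x in Set.Ioo (y - R) (y + R), ρ (φ n) x)
            atTop (nhds 0))
        (∃ α : ℝ, 0 < α ∧ ∃ R : ℝ, ∃ y : ℕ → ℝ,
          α ≤ Filter.atTop.liminf
            (fun n => ∫ x in Set.Ioo (y n - R) (y n + R), ρ (φ n) x)) := by
  by_cases hinf : ∃ α : ℝ, 0 < α ∧ {n : ℕ | α ≤ Sfun ρ n}.Infinite
  · -- Non-vanishing case
    obtain ⟨α, hα, hI⟩ := hinf
    set φ := Nat.nth {n : ℕ | α ≤ Sfun ρ n}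
    have hmono : StrictMono φ := Nat.nth_strictMono hI
    have hmem : ∀ n, α ≤ Sfun ρ (φ n) := fun n => Nat.nth_mem_of_infinite hI n
    -- choose y n with big integral
    have hchoice : ∀ n : ℕ, ∃ z : ℝ,
        α / 2 < ∫ x in Set.Ioo (z - 1) (z + 1), ρ (φ n) x := by
      intro n
      have : α / 2 < Sfun ρ (φ n) := by linarith [hmem n]
      exact exists_lt_of_lt_ciSup this
    choose y hy using hchoice
    have hcb : IsCoboundedUnder (· ≥ ·) atTop
        (fun n => ∫ x in Set.Ioo (y n - 1) (y n + 1), ρ (φ n) x) := by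
      have hb : IsBoundedUnder (· ≤ ·) atTop
          (fun n => ∫ x in Set.Ioo (y n - 1) (y n + 1), ρ (φ n) x) :=
        isBoundedUnder_of ⟨C, fun n => aux_le hpos hint hbdd (φ n) _⟩
      exact hb.isCoboundedUnder_ge
    have hNV : ∃ α : ℝ, 0 < α ∧ ∃ R : ℝ, ∃ z : ℕ → ℝ,
        α ≤ Filter.atTop.liminf
          (fun n => ∫ x in Set.Ioo (z n - R) (z n + R), ρ (φ n) x) :=
      ⟨α / 2, by linarith, 1, y,
        le_liminf_of_le hcb (Eventually.of_forall fun n => (hy n).le)⟩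
    exact ⟨φ, hmono, Or.inr ⟨hNV, fun hV => excl hpos hint hbdd φ hV hNV⟩⟩
  · -- Vanishing case: S n → 0
    push_neg at hinf
    have hS0 : Tendsto (Sfun ρ) atTop (nhds 0) := by
      rw [tendsto_order]
      constructor
      · intro a ha
        exact Eventually.of_forall fun n => lt_of_lt_of_le ha (Sfun_nonneg hpos hint hbdd n)
      · intro a ha
        have hfin := hinf a ha
        obtain ⟨N, hN⟩ := hfin.bddAbove
        rw [eventually_atTop]
        refine ⟨N + 1, fun n hn => ?_⟩
        by_contra hcon
        push_neg at hcon
        have hmem2 : n ∈ {n : ℕ | a ≤ Sfun ρ n} := hcon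
        have := hN hmem2
        omega
    have hV : ∀ R : ℝ, 0 < R →
        Tendsto (fun n => ⨆ y : ℝ, ∫ x in Set.Ioo (y - R) (y + R), ρ n x)
          atTop (nhds 0) := by
      intro R hR
      have hub : ∀ n, (⨆ y : ℝ, ∫ x in Set.Ioo (y - R) (y + R), ρ n x) ≤
          (⌈R⌉₊ : ℝ) * Sfun ρ n := by
        intro n
        apply ciSup_le
        intro z
        have hsub : ∫ x in Set.Ioo (z - R) (z + R), ρ n x ≤
            ∫ x in Set.Ioc (z - R) (z + R), ρ n x := by
          apply setIntegral_mono_set ((hint n).integrableOn)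
            (Eventually.of_forall fun x => hpos n x)
            (Eventually.of_forall Set.Ioo_subset_Ioc_self)
        refine hsub.trans (cover_bound hpos hint hbdd n ⌈R⌉₊ _ _ ?_)
        have : R ≤ (⌈R⌉₊ : ℝ) := Nat.le_ceil R
        linarith
      have hlb : ∀ n, 0 ≤ ⨆ y : ℝ, ∫ x in Set.Ioo (y - R) (y + R), ρ n x := by
        intro n
        exact le_trans (aux_nonneg hpos n measurableSet_Ioo)
          (le_ciSup (aux_bdd hpos hint hbdd n R) (0 : ℝ))
      have hmul : Tendsto (fun n => (⌈R⌉₊ : ℝ) * Sfun ρ n) atTop (nhds 0) := by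
        simpa using hS0.const_mul (⌈R⌉₊ : ℝ)
      exact tendsto_of_tendsto_of_tendsto_of_le_of_le tendsto_const_nhds hmul
        hlb hub
    refine ⟨id, strictMono_id, Or.inl ⟨hV, fun hNV => ?_⟩⟩
    exact excl hpos hint hbdd id hV hNV
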